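/- There exists a bounded constant β ∈ (1,∞), depending only on m, ν, d and the lattice data, such that max over s ∈ D_n of |f^N_s(ω)|² is at most β / (1 + ‖ω‖₂^{2ν+d}), for every ω ∈ ℝ^d with ω ≠ 0. (Lemma B.1: uniform spectral bound on the preconditioning filters.) -/

import Mathlib

open MeasureTheory ProbabilityTheory Filter Matrix BoundedContinuousFunction
open scoped BigOperators ENNReal NNReal Topology Classical

noncomputable section

/-- Points of `ℝ^d` with the Euclidean structure. -/
abbrev Pt (d : ℕ) := EuclideanSpace ℝ (Fin d)

/-- `N = ⌊n^(1/d)⌋`. -/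
def Nof (d n : ℕ) : ℕ := Nat.floor ((n : ℝ) ^ ((1 : ℝ) / (d : ℝ)))

/-- Quasi-uniformity of the `n`-point sampling set `D ⊂ ℝ^d`: for every `s ∈ D` there is an
enumeration of `D \ {s}` which is monotone in the distance to `s` (so that its `i`-th element is
the `i`-th nearest neighbour of `s`), whose distances obey the two-sided bound
`Cmin (i/n)^{1/d} ≤ r_{s,i} ≤ Cmax (i/n)^{1/d}`. -/
def QuasiUniform (d n : ℕ) (Cmin Cmax : ℝ) (D : Finset (Pt d)) : Prop :=
  D.card = n ∧
  ∀ s ∈ D, ∃ g : Fin (n - 1) → Pt d,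
    (∀ i, g i ∈ D.erase s) ∧ Function.Injective g ∧
    (∀ t ∈ D.erase s, ∃ i, g i = t) ∧
    (∀ i j : Fin (n - 1), i ≤ j → dist s (g i) ≤ dist s (g j)) ∧
    (∀ i : Fin (n - 1),
      Cmin * (((i : ℕ) + 1 : ℝ) / (n : ℝ)) ^ ((1 : ℝ) / (d : ℝ)) ≤ dist s (g i) ∧
      dist s (g i) ≤ Cmax * (((i : ℕ) + 1 : ℝ) / (n : ℝ)) ^ ((1 : ℝ) / (d : ℝ)))

/-- Preconditioning neighbourhoods `nb` and coefficients `a` of order `m` for the set `D`: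
each `N_m(s) = nb s` lies in `D` within distance `c₀/N` of `s`; the coefficients annihilate all
monomials `(t-s)^r` with `|r|₁ < m`, do not annihilate some monomial with `|r|₁ ≥ m`, and are
normalized in Euclidean norm. -/
def PrecondCoeffs (d m : ℕ) (c₀ : ℝ) (N : ℕ) (D : Finset (Pt d))
    (nb : Pt d → Finset (Pt d)) (a : Pt d → Pt d → ℝ) : Prop :=
  ∀ s ∈ D,
    nb s ⊆ D ∧
    (∀ t ∈ nb s, ‖t - s‖ ≤ c₀ / (N : ℝ)) ∧
    (∀ r : Fin d → ℕ, (∑ j, r j) < m →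
      (∑ t ∈ nb s, a s t * ∏ j, (t j - s j) ^ r j) = 0) ∧
    (∃ r : Fin d → ℕ, m ≤ (∑ j, r j) ∧
      (∑ t ∈ nb s, a s t * ∏ j, (t j - s j) ^ r j) ≠ 0) ∧
    (∑ t ∈ nb s, (a s t) ^ 2) = 1

/-- The Fourier filter `f^N_s(ω)` of the preconditioning coefficients. -/
def fN (d : ℕ) (ν : ℝ) (N : ℕ) (nb : Pt d → Finset (Pt d))
    (a : Pt d → Pt d → ℝ) (s ω : Pt d) : ℂ :=
  ((‖ω‖ ^ (-(ν + (d : ℝ) / 2)) : ℝ) : ℂ) *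
    ∑ t ∈ nb s, ((a s t : ℝ) : ℂ) *
      Complex.exp (Complex.I * ((inner ℝ ((N : ℝ) • ω) (t - s) : ℝ) : ℂ))

/-- `h_N(x) = (1 + (Nx)^{-2})^{-(ν + d/2)}`. -/
def hN (d : ℕ) (ν : ℝ) (N : ℕ) (x : ℝ) : ℝ :=
  (1 + ((N : ℝ) * x) ^ (-(2 : ℝ))) ^ (-(ν + (d : ℝ) / 2))

/-- The matrix `K_{n,m}(ρ)`, the `φ₀`-normalized covariance matrix of the preconditioned data,
given through its spectral representation. -/
def Kmat {d : ℕ} (ν : ℝ) (N : ℕ) (D : Finset (Pt d))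
    (nb : Pt d → Finset (Pt d)) (a : Pt d → Pt d → ℝ) (ρ : ℝ) :
    Matrix D D ℝ :=
  Matrix.of fun s t =>
    ρ ^ (-(2 * ν)) *
      (∫ (ω : Pt d),
        Complex.exp (Complex.I * ((inner ℝ ((t : Pt d) - (s : Pt d)) ω : ℝ) : ℂ)) *
          fN d ν N nb a (s : Pt d) ω * (starRingEnd ℂ) (fN d ν N nb a (t : Pt d) ω) *
          ((hN d ν N (ρ * ‖ω‖) : ℝ) : ℂ)).re

/-- Block-diagonal restriction of a matrix along the partition determined by a labelling `bin`. -/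
def bdiag {d : ℕ} {D : Finset (Pt d)} (bin : Pt d → ℕ) (A : Matrix D D ℝ) :
    Matrix D D ℝ :=
  Matrix.of fun s t => if bin (s : Pt d) = bin (t : Pt d) then A s t else 0

/-- `L_{n,m}(ρ) = ρ^{2ν} K_{n,m}(ρ)`. -/
def Lmat {d : ℕ} (ν : ℝ) (N : ℕ) (D : Finset (Pt d))
    (nb : Pt d → Finset (Pt d)) (a : Pt d → Pt d → ℝ) (ρ : ℝ) :
    Matrix D D ℝ :=
  ρ ^ (2 * ν) • Kmat ν N D nb a ρ

/-- `K^B_{n,m}(ρ)`: the block-diagonal approximation of `K_{n,m}(ρ)`. -/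
def KmatB {d : ℕ} (ν : ℝ) (N : ℕ) (D : Finset (Pt d))
    (nb : Pt d → Finset (Pt d)) (a : Pt d → Pt d → ℝ) (bin : Pt d → ℕ) (ρ : ℝ) :
    Matrix D D ℝ := bdiag bin (Kmat ν N D nb a ρ)

/-- `L^B_{n,m}(ρ) = ρ^{2ν} K^B_{n,m}(ρ)`. -/
def LmatB {d : ℕ} (ν : ℝ) (N : ℕ) (D : Finset (Pt d))
    (nb : Pt d → Finset (Pt d)) (a : Pt d → Pt d → ℝ) (bin : Pt d → ℕ) (ρ : ℝ) :
    Matrix D D ℝ := bdiag bin (Lmat ν N D nb a ρ)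

/-- Euclidean norm of a finite-dimensional real vector. -/
def eNorm {ι : Type*} [Fintype ι] (v : ι → ℝ) : ℝ := Real.sqrt (∑ i, (v i) ^ 2)

/-- Frobenius norm of a real matrix. -/
def frobNorm {ι : Type*} [Fintype ι] (A : Matrix ι ι ℝ) : ℝ :=
  Real.sqrt (∑ i, ∑ j, (A i j) ^ 2)

/-- The `ℓ² → ℓ²` operator (spectral) norm of a real matrix. -/
def opNorm {ι : Type*} [Fintype ι] (A : Matrix ι ι ℝ) : ℝ :=
  sSup {c : ℝ | ∃ v : ι → ℝ, eNorm v ≤ 1 ∧ c = eNorm (A.mulVec v)}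

/-- The positive semidefinite square root of a positive semidefinite matrix (the definition
`Matrix.PosSemidef.sqrt` of the older Mathlib, which has since been removed). -/
def Matrix.PosSemidef.sqrt {n : Type*} [Fintype n] [DecidableEq n]
    {A : Matrix n n ℝ} (hA : A.PosSemidef) : Matrix n n ℝ :=
  hA.1.eigenvectorUnitary.1 * Matrix.diagonal ((↑) ∘ (Real.sqrt ·) ∘ hA.1.eigenvalues) *
    (star hA.1.eigenvectorUnitary : Matrix n n ℝ)

/-- The nuclear norm (sum of singular values): trace of the psd square root of `Aᵀ A`. -/
def nucNorm {ι : Type*} [Fintype ι] [DecidableEq ι] (A : Matrix ι ι ℝ) : ℝ :=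
  (Matrix.PosSemidef.sqrt (Matrix.posSemidef_conjTranspose_mul_self A)).trace

/-- The standard Gaussian product measure on `ι → ℝ`. -/
def stdGaussianPi (ι : Type*) [Fintype ι] : Measure (ι → ℝ) :=
  Measure.pi fun _ => gaussianReal 0 1

end
section AuxLemmas

open Finset in
-- Taylor bound
theorem expTaylor (m : ℕ) (x : ℝ) :
    ‖Complex.exp (Complex.I * x) - ∑ k ∈ Finset.range m, (Complex.I * x) ^ k / (k.factorial : ℂ)‖
      ≤ |x| ^ m := by
  induction m generalizing x with
  | zero => simp [Complex.norm_exp]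
  | succ m ih =>
    set G : ℝ → ℂ := fun t =>
      Complex.exp (Complex.I * t) - ∑ k ∈ Finset.range m, (Complex.I * t) ^ k / (k.factorial : ℂ)
      with hG
    set F : ℝ → ℂ := fun t =>
      Complex.exp (Complex.I * t) - ∑ k ∈ Finset.range (m+1), (Complex.I * t) ^ k / (k.factorial : ℂ)
      with hF
    have hinner : ∀ t : ℝ, HasDerivAt (fun z : ℂ => Complex.I * z) Complex.I (t : ℂ) := by
      intro t
      simpa using (hasDerivAt_id ((t : ℝ) : ℂ)).const_mul Complex.I
    have hexp : ∀ t : ℝ, HasDerivAt (fun y : ℝ => Complex.exp (Complex.I * y))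
        (Complex.exp (Complex.I * t) * Complex.I) t := by
      intro t
      exact (HasDerivAt.comp (t : ℂ) (Complex.hasDerivAt_exp _) (hinner t)).comp_ofReal
    have hterm : ∀ (k : ℕ) (t : ℝ), HasDerivAt (fun y : ℝ => (Complex.I * y) ^ k / (k.factorial : ℂ))
        ((k : ℂ) * (Complex.I * t) ^ (k - 1) * Complex.I / (k.factorial : ℂ)) t := by
      intro k t
      exact ((HasDerivAt.comp (t : ℂ) (hasDerivAt_pow k _) (hinner t)).comp_ofReal).div_const _
    have key : ∀ t : ℝ, HasDerivAt F (Complex.I * G t) t := by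
      intro t
      have h1 := (hexp t).sub (HasDerivAt.fun_sum (u := Finset.range (m+1)) (fun k _ => hterm k t))
      convert h1 using 1
      case e'_4 => rfl
      case e'_8 => rfl
      rw [hG]
      rw [Finset.sum_range_succ']
      simp only [Nat.factorial_succ, Nat.add_sub_cancel, pow_zero, Nat.factorial_zero]
      push_cast
      simp only [zero_mul, zero_div, add_zero, Nat.cast_zero]
      rw [mul_sub, Finset.mul_sum]
      congr 1
      · ring
      refine Finset.sum_congr rfl fun k _ => ?_
      have hk : ((k : ℂ) + 1) ≠ 0 := Nat.cast_add_one_ne_zero k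
      have hf : ((k.factorial : ℂ)) ≠ 0 := Nat.cast_ne_zero.2 (Nat.factorial_ne_zero k)
      field_simp
    have hF0 : F 0 = 0 := by
      simp [hF, Finset.sum_range_succ', Complex.exp_zero]
    have hcont : Continuous fun t : ℝ => Complex.I * G t := by
      rw [hG]; fun_prop
    have hint : ∀ x : ℝ, F x = ∫ t in (0:ℝ)..x, Complex.I * G t := by
      intro x
      have h := intervalIntegral.integral_eq_sub_of_hasDerivAt (fun t (_ : t ∈ Set.uIcc 0 x) => key t)
        (hcont.intervalIntegrable 0 x)
      rw [hF0, sub_zero] at h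
      exact h.symm
    rw [show (Complex.exp (Complex.I * x) - ∑ k ∈ Finset.range (m+1), (Complex.I * x) ^ k / (k.factorial : ℂ)) = F x from rfl, hint x]
    have hb : ∀ t ∈ Set.uIoc (0:ℝ) x, ‖Complex.I * G t‖ ≤ |x| ^ m := by
      intro t ht
      have h1 : |t| ≤ |x| := by
        rcases Set.mem_uIoc.1 ht with h | h
        · rw [abs_of_pos h.1, abs_of_nonneg (h.1.le.trans h.2)]; exact h.2
        · rw [abs_of_nonpos h.2, abs_of_neg (h.1.trans_le h.2)]; linarith [h.1]
      calc ‖Complex.I * G t‖ = ‖G t‖ := by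
            rw [norm_mul, Complex.norm_I, one_mul]
        _ ≤ |t| ^ m := ih t
        _ ≤ |x| ^ m := pow_le_pow_left₀ (abs_nonneg t) h1 m
    calc ‖∫ t in (0:ℝ)..x, Complex.I * G t‖ ≤ |x| ^ m * |x - 0| :=
          intervalIntegral.norm_integral_le_of_norm_le_const hb
      _ = |x| ^ (m + 1) := by rw [sub_zero, pow_succ]


open Finset in

theorem moment_kill {α : Type*} {d m : ℕ} (s0 : Finset α) (a : α → ℝ) (v : α → Fin d → ℝ)
    (h : ∀ r : Fin d → ℕ, (∑ j, r j) < m → ∑ t ∈ s0, a t * ∏ j, (v t j) ^ (r j) = 0)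
    (c : Fin d → ℝ) (k : ℕ) (hk : k < m) :
    ∑ t ∈ s0, a t * (∑ j, c j * v t j) ^ k = 0 := by
  have hpow : ∀ t, (∑ j, c j * v t j) ^ k
      = ∑ g : Fin k → Fin d, (∏ i, c (g i)) * ∏ i, v t (g i) := by
    intro t
    rw [Fintype.sum_pow]
    exact Finset.sum_congr rfl fun g _ => by rw [← Finset.prod_mul_distrib]
  calc ∑ t ∈ s0, a t * (∑ j, c j * v t j) ^ k
      = ∑ g : Fin k → Fin d, (∏ i, c (g i)) * ∑ t ∈ s0, a t * ∏ i, v t (g i) := by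
        simp_rw [hpow, Finset.mul_sum]
        rw [Finset.sum_comm]
        refine Finset.sum_congr rfl fun g _ => ?_
        refine Finset.sum_congr rfl fun t _ => ?_
        ring
    _ = 0 := by
        refine Finset.sum_eq_zero fun g _ => ?_
        have hfib : ∀ t, (∏ i, v t (g i))
            = ∏ j, (v t j) ^ ((Finset.univ.filter fun i => g i = j).card) := by
          intro t
          rw [Finset.prod_comp (fun j => v t j) g]
          refine Finset.prod_subset (Finset.subset_univ _) fun j _ hj => ?_
          rw [Finset.filter_eq_empty_iff.2, Finset.card_empty, pow_zero]
          intro i _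
          exact fun hgi => hj (Finset.mem_image.2 ⟨i, Finset.mem_univ i, hgi⟩)
        have hcard : (∑ j, (Finset.univ.filter fun i => g i = j).card) = k := by
          rw [← Finset.card_eq_sum_card_fiberwise (fun i _ => Finset.mem_univ (g i))]
          simp
        have h0 : ∑ t ∈ s0, a t * ∏ i, v t (g i) = 0 := by
          simp_rw [hfib]
          exact h _ (by rw [hcard]; exact hk)
        rw [h0, mul_zero]


theorem rpow_invd {d : ℕ} (hd : 1 ≤ d) {y : ℝ} (hy : 0 ≤ y) :
    (y ^ ((1:ℝ)/(d:ℝ))) ^ (d:ℕ) = y := by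
  have hdne : (d:ℝ) ≠ 0 := Nat.cast_ne_zero.2 (by omega)
  rw [← Real.rpow_natCast (y ^ ((1:ℝ)/(d:ℝ))) d, ← Real.rpow_mul hy,
    one_div, inv_mul_cancel₀ hdne, Real.rpow_one]

theorem Nof_one_le {d n : ℕ} (hn : 1 ≤ n) : 1 ≤ Nof d n := by
  apply Nat.le_floor
  rw [Nat.cast_one]
  exact Real.one_le_rpow (by exact_mod_cast hn) (by positivity)

theorem card_nb_le (d n : ℕ) (Cmin c₀ : ℝ) (hd : 1 ≤ d) (hCmin : 0 < Cmin) (hc₀ : 0 < c₀)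
    (D : Finset (Pt d)) (s : Pt d) (hs : s ∈ D) (hcard : D.card = n)
    (E : Finset (Pt d)) (hE : E ⊆ D) (hEd : ∀ t ∈ E, ‖t - s‖ ≤ c₀ / (Nof d n : ℝ))
    (g : Fin (n - 1) → Pt d)
    (hg_surj : ∀ t ∈ D.erase s, ∃ i, g i = t)
    (hg_low : ∀ i : Fin (n - 1),
      Cmin * (((i : ℕ) + 1 : ℝ) / (n : ℝ)) ^ ((1 : ℝ) / (d : ℝ)) ≤ dist s (g i)) :
    E.card ≤ Nat.ceil ((2*c₀/Cmin)^d) + 1 := by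
  classical
  set N : ℕ := Nof d n with hN
  set M : ℕ := Nat.ceil ((2*c₀/Cmin)^d) with hMdef
  have hn1 : 1 ≤ n := hcard ▸ Finset.card_pos.2 ⟨s, hs⟩
  have hn1R : (1:ℝ) ≤ n := by exact_mod_cast hn1
  have hnpos : (0:ℝ) < n := by linarith
  have hN1 : 1 ≤ N := Nof_one_le hn1
  have hNR : (1:ℝ) ≤ (N:ℝ) := by exact_mod_cast hN1
  have hNpos : (0:ℝ) < N := by linarith
  have hnN : (n:ℝ) ≤ 2^d * (N:ℝ)^d := by
    have h1 : ((n:ℝ) ^ ((1:ℝ)/(d:ℝ))) < (N:ℝ) + 1 := Nat.lt_floor_add_one _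
    calc (n:ℝ) = ((n:ℝ) ^ ((1:ℝ)/(d:ℝ))) ^ (d:ℕ) := (rpow_invd hd (by positivity)).symm
      _ ≤ ((N:ℝ) + 1) ^ (d:ℕ) := pow_le_pow_left₀ (by positivity) h1.le d
      _ ≤ (2*(N:ℝ)) ^ (d:ℕ) := pow_le_pow_left₀ (by positivity) (by linarith) d
      _ = 2^d * (N:ℝ)^d := mul_pow _ _ _
  have hM : ∀ i : Fin (n-1), dist s (g i) ≤ c₀ / N → (i:ℕ) < M := by
    intro i hi
    rw [hMdef, Nat.lt_ceil]
    have h0 := (hg_low i).trans hi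
    have hy : (0:ℝ) ≤ ((i:ℕ) + 1 : ℝ) / (n:ℝ) := by positivity
    have h1 : (((i:ℕ) + 1 : ℝ) / (n:ℝ)) ^ ((1:ℝ)/(d:ℝ)) ≤ c₀ / ((N:ℝ) * Cmin) := by
      rw [← div_div]
      exact (le_div_iff₀' hCmin).2 h0
    have h2 : (((i:ℕ) + 1 : ℝ) / (n:ℝ)) ≤ (c₀ / ((N:ℝ)*Cmin))^(d:ℕ) := by
      calc (((i:ℕ) + 1 : ℝ) / (n:ℝ)) = ((((i:ℕ) + 1 : ℝ) / (n:ℝ)) ^ ((1:ℝ)/(d:ℝ))) ^ (d:ℕ) :=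
            (rpow_invd hd hy).symm
        _ ≤ (c₀ / ((N:ℝ)*Cmin))^(d:ℕ) :=
            pow_le_pow_left₀ (Real.rpow_nonneg hy _) h1 d
    have h3 : ((i:ℕ) : ℝ) + 1 ≤ (c₀ / ((N:ℝ)*Cmin))^(d:ℕ) * n := by
      rw [div_le_iff₀ hnpos] at h2
      linarith
    have h4 : (c₀ / ((N:ℝ)*Cmin))^(d:ℕ) * n ≤ (c₀ / ((N:ℝ)*Cmin))^(d:ℕ) * (2^d * (N:ℝ)^d) := by
      have : (0:ℝ) ≤ (c₀ / ((N:ℝ)*Cmin))^(d:ℕ) := by positivity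
      exact mul_le_mul_of_nonneg_left hnN this
    have h5 : (c₀ / ((N:ℝ)*Cmin))^(d:ℕ) * (2^d * (N:ℝ)^d) = (2*c₀/Cmin)^d := by
      rw [div_pow, div_pow, mul_pow, mul_pow]
      field_simp
    have : ((i:ℕ) : ℝ) + 1 ≤ (2*c₀/Cmin)^d := by
      rw [← h5]; exact h3.trans h4
    linarith
  -- now the counting
  have hsubset : E ⊆ insert s ((D.erase s).filter fun t => dist s t ≤ c₀ / (N:ℝ)) := by
    intro t ht
    by_cases hts : t = s
    · simp [hts]
    · refine Finset.mem_insert_of_mem (Finset.mem_filter.2 ⟨Finset.mem_erase.2 ⟨hts, hE ht⟩, ?_⟩)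
      rw [dist_comm, dist_eq_norm]
      exact hEd t ht
  have hsub2 : (D.erase s).filter (fun t => dist s t ≤ c₀ / (N:ℝ)) ⊆
      Finset.image g (Finset.univ.filter fun i => dist s (g i) ≤ c₀ / (N:ℝ)) := by
    intro t ht
    obtain ⟨ht1, ht2⟩ := Finset.mem_filter.1 ht
    obtain ⟨i, hi⟩ := hg_surj t ht1
    exact Finset.mem_image.2 ⟨i, Finset.mem_filter.2 ⟨Finset.mem_univ _, by rw [hi]; exact ht2⟩, hi⟩
  have hcount : (Finset.univ.filter fun i : Fin (n-1) => dist s (g i) ≤ c₀ / (N:ℝ)).card ≤ M := by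
    have := Finset.card_le_card_of_injOn
      (s := Finset.univ.filter fun i : Fin (n-1) => dist s (g i) ≤ c₀ / (N:ℝ))
      (t := Finset.range M) (fun i : Fin (n-1) => (i:ℕ))
      (fun i hi => Finset.mem_range.2 (hM i (Finset.mem_filter.1 hi).2))
      (fun i _ j _ h => Fin.val_injective h)
    simpa using this
  calc E.card ≤ (insert s ((D.erase s).filter fun t => dist s t ≤ c₀ / (N:ℝ))).card :=
        Finset.card_le_card hsubset
    _ ≤ ((D.erase s).filter fun t => dist s t ≤ c₀ / (N:ℝ)).card + 1 := Finset.card_insert_le _ _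
    _ ≤ (Finset.image g (Finset.univ.filter fun i => dist s (g i) ≤ c₀ / (N:ℝ))).card + 1 := by
        exact Nat.add_le_add_right (Finset.card_le_card hsub2) 1
    _ ≤ (Finset.univ.filter fun i : Fin (n-1) => dist s (g i) ≤ c₀ / (N:ℝ)).card + 1 :=
        Nat.add_le_add_right (Finset.card_image_le) 1
    _ ≤ M + 1 := Nat.add_le_add_right hcount 1

end AuxLemmas

set_option maxHeartbeats 1000000 in
/-- **Lemma B.1 (uniform spectral bound on the preconditioning filters).**  There is a bounded
constant `β ∈ (1, ∞)`, depending only on `m, ν, d` and the lattice data (through the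
quasi-uniformity constants and the neighbourhood-radius constant) but not on `n`, such that
`max_{s ∈ Dₙ} |f^N_s(ω)|² ≤ β / (1 + ‖ω‖^{2ν+d})` for every `ω ≠ 0`. -/
theorem stmt3 (d m : ℕ) (ν Cmin Cmax c₀ : ℝ)
    (hd : 1 ≤ d) (hν : 0 < ν) (hm : ν + (d : ℝ) / 2 ≤ (m : ℝ))
    (hCmin : 0 < Cmin) (hCC : Cmin ≤ Cmax) (hc₀ : 0 < c₀) :
    ∃ β : ℝ, 1 < β ∧
      ∀ (n : ℕ) (D : Finset (Pt d)) (nb : Pt d → Finset (Pt d)) (a : Pt d → Pt d → ℝ),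
        QuasiUniform d n Cmin Cmax D →
        PrecondCoeffs d m c₀ (Nof d n) D nb a →
        ∀ ω : Pt d, ω ≠ 0 → ∀ s ∈ D,
          ‖fN d ν (Nof d n) nb a s ω‖ ^ 2 ≤
            β / (1 + ‖ω‖ ^ (2 * ν + (d : ℝ))) := by
  classical
  set M : ℕ := Nat.ceil ((2*c₀/Cmin)^d) with hM
  set B : ℝ := (M:ℝ) + 1 with hB
  have hB1 : (1:ℝ) ≤ B := by
    rw [hB]; linarith [Nat.cast_nonneg (α := ℝ) M]
  have hBnn : (0:ℝ) ≤ B := by linarith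
  refine ⟨2*B*(1 + c₀^(2*m)) + 2, ?_, ?_⟩
  · nlinarith [pow_nonneg hc₀.le (2*m)]
  intro n D nb a hQ hP ω hω s hs
  obtain ⟨hcard, hQ2⟩ := hQ
  obtain ⟨hsub, hdistnb, hmom, -, hnorm⟩ := hP s hs
  obtain ⟨g, hg_mem, hg_inj, hg_surj, -, hg_bnd⟩ := hQ2 s hs
  set N : ℕ := Nof d n with hNdef
  have hn1 : 1 ≤ n := hcard ▸ Finset.card_pos.2 ⟨s, hs⟩
  have hN1 : 1 ≤ N := Nof_one_le hn1
  have hNpos : (0:ℝ) < (N:ℝ) := by exact_mod_cast hN1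
  have hcardnb : ((nb s).card : ℝ) ≤ B := by
    have := card_nb_le d n Cmin c₀ hd hCmin hc₀ D s hs hcard (nb s) hsub hdistnb g hg_surj
      (fun i => (hg_bnd i).1)
    rw [hB]
    exact_mod_cast this
  have hω0 : (0:ℝ) < ‖ω‖ := norm_pos_iff.2 hω
  have hsuma : ∑ t ∈ nb s, |a s t| ≤ Real.sqrt B := by
    have h1 : (∑ t ∈ nb s, |a s t|)^2 ≤ ((nb s).card : ℝ) * ∑ t ∈ nb s, (a s t)^2 := by
      simpa [sq_abs] using sq_sum_le_card_mul_sum_sq (s := nb s) (f := fun t => |a s t|)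
    rw [hnorm, mul_one] at h1
    exact Real.le_sqrt_of_sq_le (h1.trans hcardnb)
  unfold fN
  set x : Pt d → ℝ := fun t => (inner ℝ ((N:ℝ) • ω) (t - s) : ℝ) with hxdef
  have hxb : ∀ t ∈ nb s, |x t| ≤ c₀ * ‖ω‖ := by
    intro t ht
    calc |x t| ≤ ‖(N:ℝ) • ω‖ * ‖t - s‖ := abs_real_inner_le_norm _ _
      _ = (N:ℝ) * ‖ω‖ * ‖t - s‖ := by rw [norm_smul, Real.norm_of_nonneg hNpos.le]
      _ ≤ (N:ℝ) * ‖ω‖ * (c₀ / (N:ℝ)) := by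
          exact mul_le_mul_of_nonneg_left (hdistnb t ht) (by positivity)
      _ = c₀ * ‖ω‖ := by field_simp
  set S : ℂ := ∑ t ∈ nb s, ((a s t : ℝ):ℂ) * Complex.exp (Complex.I * ((x t : ℝ):ℂ)) with hSdef
  have hS1 : ‖S‖ ≤ Real.sqrt B := by
    calc ‖S‖ ≤ ∑ t ∈ nb s, ‖((a s t : ℝ):ℂ) * Complex.exp (Complex.I * ((x t:ℝ):ℂ))‖ :=
          norm_sum_le _ _
      _ = ∑ t ∈ nb s, |a s t| := by
          refine Finset.sum_congr rfl fun t _ => ?_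
          rw [norm_mul, Complex.norm_real, Real.norm_eq_abs, mul_comm Complex.I,
            Complex.norm_exp_ofReal_mul_I, mul_one]
      _ ≤ Real.sqrt B := hsuma
  have hx_lin : ∀ t : Pt d, x t = ∑ j, ((N:ℝ) • ω) j * (t j - s j) := by
    intro t
    rw [hxdef]
    simp only [PiLp.inner_apply, RCLike.inner_apply, conj_trivial]
    refine Finset.sum_congr rfl fun j _ => ?_
    simp only [PiLp.sub_apply, mul_comm]
  have hmomR : ∀ k, k < m → ∑ t ∈ nb s, a s t * (x t)^k = 0 := by
    intro k hk
    have h := moment_kill (nb s) (a s) (fun t j => t j - s j) hmom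
      (fun j => ((N:ℝ) • ω) j) k hk
    simp_rw [hx_lin]
    exact h
  have hmomC : ∀ k, k < m → ∑ t ∈ nb s, ((a s t : ℝ):ℂ) * ((x t : ℝ):ℂ)^k = 0 := by
    intro k hk
    have h1 : ∑ t ∈ nb s, ((a s t : ℝ):ℂ) * ((x t : ℝ):ℂ)^k
        = ((∑ t ∈ nb s, a s t * (x t)^k : ℝ) : ℂ) := by
      rw [Complex.ofReal_sum]
      exact Finset.sum_congr rfl fun t _ => by push_cast; ring
    rw [h1, hmomR k hk, Complex.ofReal_zero]
  have hzero : ∑ t ∈ nb s, ((a s t : ℝ):ℂ) *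
      ∑ k ∈ Finset.range m, (Complex.I * ((x t:ℝ):ℂ))^k / (k.factorial:ℂ) = 0 := by
    simp_rw [Finset.mul_sum]
    rw [Finset.sum_comm]
    refine Finset.sum_eq_zero fun k hk => ?_
    have h1 : ∀ t ∈ nb s, ((a s t:ℝ):ℂ) * ((Complex.I * ((x t:ℝ):ℂ))^k / (k.factorial:ℂ))
        = (Complex.I^k / (k.factorial:ℂ)) * (((a s t:ℝ):ℂ) * ((x t:ℝ):ℂ)^k) := fun t _ => by
      rw [mul_pow]; ring
    rw [Finset.sum_congr rfl h1, ← Finset.mul_sum, hmomC k (Finset.mem_range.1 hk), mul_zero]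
  have hS2 : ‖S‖ ≤ Real.sqrt B * (c₀*‖ω‖)^m := by
    have hsplit : S = ∑ t ∈ nb s, ((a s t:ℝ):ℂ) *
        (Complex.exp (Complex.I * ((x t:ℝ):ℂ))
          - ∑ k ∈ Finset.range m, (Complex.I*((x t:ℝ):ℂ))^k/(k.factorial:ℂ)) := by
      simp_rw [mul_sub]
      rw [Finset.sum_sub_distrib, hzero, sub_zero, hSdef]
    rw [hsplit]
    calc ‖∑ t ∈ nb s, ((a s t:ℝ):ℂ) *
        (Complex.exp (Complex.I * ((x t:ℝ):ℂ))
          - ∑ k ∈ Finset.range m, (Complex.I*((x t:ℝ):ℂ))^k/(k.factorial:ℂ))‖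
        ≤ ∑ t ∈ nb s, ‖((a s t:ℝ):ℂ) *
          (Complex.exp (Complex.I * ((x t:ℝ):ℂ))
            - ∑ k ∈ Finset.range m, (Complex.I*((x t:ℝ):ℂ))^k/(k.factorial:ℂ))‖ :=
          norm_sum_le _ _
      _ ≤ ∑ t ∈ nb s, |a s t| * (c₀*‖ω‖)^m := by
          refine Finset.sum_le_sum fun t ht => ?_
          rw [norm_mul, Complex.norm_real, Real.norm_eq_abs]
          refine mul_le_mul_of_nonneg_left ?_ (abs_nonneg _)
          exact (expTaylor m (x t)).trans
            (pow_le_pow_left₀ (abs_nonneg _) (hxb t ht) m)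
      _ = (∑ t ∈ nb s, |a s t|) * (c₀*‖ω‖)^m := (Finset.sum_mul _ _ _).symm
      _ ≤ Real.sqrt B * (c₀*‖ω‖)^m :=
          mul_le_mul_of_nonneg_right hsuma (by positivity)
  set r : ℝ := ‖ω‖ ^ (-(ν + (d:ℝ)/2)) with hr
  have habs : ‖(↑r : ℂ) * S‖ = r * ‖S‖ := by
    rw [norm_mul, Complex.norm_real, Real.norm_eq_abs,
      abs_of_nonneg (Real.rpow_nonneg (norm_nonneg ω) _)]
  rw [habs, mul_pow]
  set P : ℝ := ‖ω‖ ^ (2*ν + (d:ℝ)) with hPdef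
  have hPpos : 0 < P := Real.rpow_pos_of_pos hω0 _
  have hr2 : r^2 = P⁻¹ := by
    rw [hr, sq, ← Real.rpow_add hω0, hPdef, ← Real.rpow_neg (norm_nonneg ω)]
    congr 1
    ring
  have h1P : (0:ℝ) < 1 + P := by positivity
  rw [le_div_iff₀ h1P]
  have hSnn : (0:ℝ) ≤ ‖S‖ := norm_nonneg S
  rcases le_or_gt 1 ‖ω‖ with hcase | hcase
  · have hSB : ‖S‖^2 ≤ B := by
      calc ‖S‖^2 ≤ (Real.sqrt B)^2 := pow_le_pow_left₀ hSnn hS1 2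
        _ = B := Real.sq_sqrt hBnn
    have hP1 : 1 ≤ P := Real.one_le_rpow hcase (by linarith)
    calc r^2 * ‖S‖^2 * (1+P) ≤ P⁻¹ * B * (2*P) := by
          rw [hr2]
          gcongr
          linarith
      _ = 2*B := by field_simp
      _ ≤ 2*B*(1 + c₀^(2*m)) + 2 := by nlinarith [pow_nonneg hc₀.le (2*m)]
  · have hSB : ‖S‖^2 ≤ B * (c₀^(2*m) * ‖ω‖^(2*m)) := by
      calc ‖S‖^2 ≤ (Real.sqrt B * (c₀*‖ω‖)^m)^2 := pow_le_pow_left₀ hSnn hS2 2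
        _ = B * (c₀^(2*m) * ‖ω‖^(2*m)) := by
            rw [mul_pow, Real.sq_sqrt hBnn, ← pow_mul, mul_comm m 2, mul_pow]
    have hkey : ‖ω‖^(2*m) * r^2 ≤ 1 := by
      rw [hr2, hPdef, ← Real.rpow_neg (norm_nonneg ω),
        ← Real.rpow_natCast ‖ω‖ (2*m), ← Real.rpow_add hω0]
      apply Real.rpow_le_one (norm_nonneg ω) hcase.le
      push_cast
      linarith
    have hP1 : P ≤ 1 := Real.rpow_le_one (norm_nonneg ω) hcase.le (by linarith)
    calc r^2 * ‖S‖^2 * (1+P) ≤ r^2 * (B * (c₀^(2*m) * ‖ω‖^(2*m))) * 2 := by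
          gcongr
          linarith
      _ = 2*B*c₀^(2*m) * (‖ω‖^(2*m) * r^2) := by ring
      _ ≤ 2*B*c₀^(2*m) * 1 :=
          mul_le_mul_of_nonneg_left hkey
            (mul_nonneg (by linarith) (pow_nonneg hc₀.le _))
      _ ≤ 2*B*(1 + c₀^(2*m)) + 2 := by nlinarith [pow_nonneg hc₀.le (2*m)]
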